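/- There exist v_* > 4‖f'‖ and a map Ψ : {(t, v) ∈ ℝ² : v > v_*} → ℝ², Ψ(t, v) = (t̄(t,v), v̄(t,v)), of class C², injective, with everywhere invertible differential, such that for all (t, v) in its domain: t̄(t,v) > t, Ψ(t+1, v) = Ψ(t, v) + (1, 0), and the bounce equations hold: t̄ = t + (2/g)v − (2/g)f[t,t̄] + (2/g)f'(t) and v̄ = v − 2f[t,t̄] + f'(t̄) + f'(t). -/

import Mathlib

open Set Filter Topology

noncomputable section TennisAux

def row2 (a b : ℝ) : ℝ × ℝ →L[ℝ] ℝ :=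
  a • ContinuousLinearMap.fst ℝ ℝ ℝ + b • ContinuousLinearMap.snd ℝ ℝ ℝ

@[simp] lemma row2_apply (a b : ℝ) (v : ℝ × ℝ) : row2 a b v = a * v.1 + b * v.2 := by
  simp [row2, smul_eq_mul]

def mk2 (a b c d : ℝ) : ℝ × ℝ →L[ℝ] ℝ × ℝ := (row2 a b).prod (row2 c d)

@[simp] lemma mk2_apply (a b c d : ℝ) (v : ℝ × ℝ) :
    mk2 a b c d v = (a * v.1 + b * v.2, c * v.1 + d * v.2) := by
  simp [mk2, ContinuousLinearMap.prod_apply]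

def mk2e (a b c d : ℝ) (h : a * d - b * c ≠ 0) : (ℝ × ℝ) ≃L[ℝ] ℝ × ℝ :=
  ContinuousLinearEquiv.equivOfInverse (mk2 a b c d)
    (mk2 (d / (a*d-b*c)) (-b / (a*d-b*c)) (-c / (a*d-b*c)) (a / (a*d-b*c)))
    (fun v => by
      simp only [mk2_apply]
      obtain ⟨x, y⟩ := v
      have key : (a*d-b*c) * (a*d-b*c)⁻¹ = 1 := mul_inv_cancel₀ h
      exact Prod.ext (by simp only; linear_combination x * key)
        (by simp only; linear_combination y * key))
    (fun v => by
      simp only [mk2_apply]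
      obtain ⟨x, y⟩ := v
      have key : (a*d-b*c) * (a*d-b*c)⁻¹ = 1 := mul_inv_cancel₀ h
      exact Prod.ext (by simp only; linear_combination x * key)
        (by simp only; linear_combination y * key))

@[simp] lemma mk2e_coe (a b c d : ℝ) (h : a * d - b * c ≠ 0) :
    (mk2e a b c d h : ℝ × ℝ →L[ℝ] ℝ × ℝ) = mk2 a b c d := rfl

lemma det_ne_zero_equiv (e : (ℝ × ℝ) ≃L[ℝ] ℝ × ℝ) :
    ContinuousLinearMap.det (e : ℝ × ℝ →L[ℝ] ℝ × ℝ) ≠ 0 :=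
  (LinearEquiv.isUnit_det' e.toLinearEquiv).ne_zero

def Qf (f : ℝ → ℝ) (t s : ℝ) : ℝ := (f s - f t) / (s - t)
def Gf (g : ℝ) (f : ℝ → ℝ) (t s : ℝ) : ℝ := g * (s - t) / 2 + Qf f t s - deriv f t
def Vf (g : ℝ) (f : ℝ → ℝ) (t s : ℝ) : ℝ := g * (s - t) / 2 - Qf f t s + deriv f s
def Qdt (f : ℝ → ℝ) (t s : ℝ) : ℝ := -(deriv f t) / (s - t) + (f s - f t) / (s - t)^2
def Qds (f : ℝ → ℝ) (t s : ℝ) : ℝ := deriv f s / (s - t) - (f s - f t) / (s - t)^2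

variable {g : ℝ} {f : ℝ → ℝ}

lemma diff_f (hf : ContDiff ℝ 3 f) : Differentiable ℝ f := hf.differentiable (by norm_num)

lemma contDiff_deriv_f (hf : ContDiff ℝ 3 f) : ContDiff ℝ 2 (deriv f) := by
  have h3 : (3 : WithTop ℕ∞) = 2 + 1 := by norm_num
  rw [h3] at hf
  exact (contDiff_succ_iff_deriv.mp hf).2.2

lemma diff_deriv_f (hf : ContDiff ℝ 3 f) : Differentiable ℝ (deriv f) :=
  (contDiff_deriv_f hf).differentiable (by norm_num)

lemma hasFDerivAt_Qf (hf : ContDiff ℝ 3 f) {t s : ℝ} (h : s - t ≠ 0) :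
    HasFDerivAt (fun p : ℝ × ℝ => Qf f p.1 p.2) (row2 (Qdt f t s) (Qds f t s)) (t, s) := by
  have hdf := diff_f hf
  have hnum : HasFDerivAt (fun p : ℝ × ℝ => f p.2 - f p.1)
      ((deriv f s) • ContinuousLinearMap.snd ℝ ℝ ℝ
        - (deriv f t) • ContinuousLinearMap.fst ℝ ℝ ℝ) (t, s) :=
    (((hdf s).hasDerivAt).comp_hasFDerivAt (t, s) hasFDerivAt_snd).sub
      (((hdf t).hasDerivAt).comp_hasFDerivAt (t, s) hasFDerivAt_fst)
  have hden : HasFDerivAt (fun p : ℝ × ℝ => p.2 - p.1)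
      (ContinuousLinearMap.snd ℝ ℝ ℝ - ContinuousLinearMap.fst ℝ ℝ ℝ) (t, s) :=
    hasFDerivAt_snd.sub hasFDerivAt_fst
  have hinv : HasFDerivAt (fun p : ℝ × ℝ => (p.2 - p.1)⁻¹)
      ((-((s - t) ^ 2)⁻¹) • (ContinuousLinearMap.snd ℝ ℝ ℝ - ContinuousLinearMap.fst ℝ ℝ ℝ))
      (t, s) := (hasDerivAt_inv h).comp_hasFDerivAt (t, s) hden
  have hmul := hnum.mul hinv
  have heq : (fun p : ℝ × ℝ => Qf f p.1 p.2)
      = fun p : ℝ × ℝ => (f p.2 - f p.1) * (p.2 - p.1)⁻¹ := by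
    funext p; simp [Qf, div_eq_mul_inv]
  rw [heq]
  refine hmul.congr_fderiv ?_
  apply ContinuousLinearMap.ext
  intro v
  simp only [row2_apply, ContinuousLinearMap.add_apply, ContinuousLinearMap.smul_apply,
    ContinuousLinearMap.sub_apply, ContinuousLinearMap.coe_fst', ContinuousLinearMap.coe_snd',
    smul_eq_mul, Qdt, Qds]
  field_simp
  ring

lemma hasFDerivAt_Phi (g : ℝ) (hf : ContDiff ℝ 3 f) {t s : ℝ} (h : s - t ≠ 0) :
    HasFDerivAt (fun p : ℝ × ℝ => (p.1, Gf g f p.1 p.2))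
      (mk2 1 0 (-(g/2) + Qdt f t s - deriv (deriv f) t) (g/2 + Qds f t s)) (t, s) := by
  have hQ := hasFDerivAt_Qf hf h
  have hden : HasFDerivAt (fun p : ℝ × ℝ => p.2 - p.1)
      (ContinuousLinearMap.snd ℝ ℝ ℝ - ContinuousLinearMap.fst ℝ ℝ ℝ) (t, s) :=
    hasFDerivAt_snd.sub hasFDerivAt_fst
  have hlin : HasFDerivAt (fun p : ℝ × ℝ => g / 2 * (p.2 - p.1))
      ((g / 2) • (ContinuousLinearMap.snd ℝ ℝ ℝ - ContinuousLinearMap.fst ℝ ℝ ℝ)) (t, s) :=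
    hden.const_mul (g / 2)
  have hD1 : HasFDerivAt (fun p : ℝ × ℝ => deriv f p.1)
      ((deriv (deriv f) t) • ContinuousLinearMap.fst ℝ ℝ ℝ) (t, s) :=
    ((diff_deriv_f hf t).hasDerivAt).comp_hasFDerivAt (f := Prod.fst) (t, s) hasFDerivAt_fst
  have hG := (hlin.add hQ).sub hD1
  have hfst : HasFDerivAt (fun p : ℝ × ℝ => p.1) (ContinuousLinearMap.fst ℝ ℝ ℝ) (t, s) :=
    hasFDerivAt_fst
  have hprod := hfst.prodMk hG
  have heq : (fun p : ℝ × ℝ => (p.1, Gf g f p.1 p.2))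
      = fun p : ℝ × ℝ => (p.1, g / 2 * (p.2 - p.1) + Qf f p.1 p.2 - deriv f p.1) := by
    funext p; refine Prod.ext rfl ?_; simp only [Gf]; ring
  rw [heq]
  refine hprod.congr_fderiv ?_
  apply ContinuousLinearMap.ext
  intro v
  simp only [mk2_apply, ContinuousLinearMap.prod_apply, ContinuousLinearMap.add_apply,
    ContinuousLinearMap.smul_apply, ContinuousLinearMap.sub_apply,
    ContinuousLinearMap.coe_fst', ContinuousLinearMap.coe_snd', row2_apply, smul_eq_mul,
    Qdt, Qds]
  refine Prod.ext ?_ ?_ <;> simp only <;> ring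

lemma hasFDerivAt_H (g : ℝ) (hf : ContDiff ℝ 3 f) {t s : ℝ} (h : s - t ≠ 0) :
    HasFDerivAt (fun p : ℝ × ℝ => (p.2, Vf g f p.1 p.2))
      (mk2 0 1 (-(g/2) - Qdt f t s) (g/2 - Qds f t s + deriv (deriv f) s)) (t, s) := by
  have hQ := hasFDerivAt_Qf hf h
  have hden : HasFDerivAt (fun p : ℝ × ℝ => p.2 - p.1)
      (ContinuousLinearMap.snd ℝ ℝ ℝ - ContinuousLinearMap.fst ℝ ℝ ℝ) (t, s) :=
    hasFDerivAt_snd.sub hasFDerivAt_fst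
  have hlin : HasFDerivAt (fun p : ℝ × ℝ => g / 2 * (p.2 - p.1))
      ((g / 2) • (ContinuousLinearMap.snd ℝ ℝ ℝ - ContinuousLinearMap.fst ℝ ℝ ℝ)) (t, s) :=
    hden.const_mul (g / 2)
  have hD1 : HasFDerivAt (fun p : ℝ × ℝ => deriv f p.2)
      ((deriv (deriv f) s) • ContinuousLinearMap.snd ℝ ℝ ℝ) (t, s) :=
    ((diff_deriv_f hf s).hasDerivAt).comp_hasFDerivAt (f := Prod.snd) (t, s) hasFDerivAt_snd
  have hV := (hlin.sub hQ).add hD1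
  have hsnd : HasFDerivAt (fun p : ℝ × ℝ => p.2) (ContinuousLinearMap.snd ℝ ℝ ℝ) (t, s) :=
    hasFDerivAt_snd
  have hprod := hsnd.prodMk hV
  have heq : (fun p : ℝ × ℝ => (p.2, Vf g f p.1 p.2))
      = fun p : ℝ × ℝ => (p.2, g / 2 * (p.2 - p.1) - Qf f p.1 p.2 + deriv f p.2) := by
    funext p; refine Prod.ext rfl ?_; simp only [Vf]; ring
  rw [heq]
  refine hprod.congr_fderiv ?_
  apply ContinuousLinearMap.ext
  intro v
  simp only [mk2_apply, ContinuousLinearMap.prod_apply, ContinuousLinearMap.add_apply,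
    ContinuousLinearMap.smul_apply, ContinuousLinearMap.sub_apply,
    ContinuousLinearMap.coe_fst', ContinuousLinearMap.coe_snd', row2_apply, smul_eq_mul,
    Qdt, Qds]
  refine Prod.ext ?_ ?_ <;> simp only <;> ring

lemma contDiffAt_Phi (g : ℝ) (hf : ContDiff ℝ 3 f) {x : ℝ × ℝ} (h : x.2 - x.1 ≠ 0) :
    ContDiffAt ℝ 2 (fun p : ℝ × ℝ => (p.1, Gf g f p.1 p.2)) x := by
  have h2 : ContDiff ℝ 2 f := hf.of_le (by norm_num)
  have hQ : ContDiffAt ℝ 2 (fun p : ℝ × ℝ => Qf f p.1 p.2) x := by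
    exact ((h2.comp contDiff_snd).sub (h2.comp contDiff_fst)).contDiffAt.div
      ((contDiff_snd.sub contDiff_fst)).contDiffAt h
  have hD : ContDiffAt ℝ 2 (fun p : ℝ × ℝ => deriv f p.1) x :=
    ((contDiff_deriv_f hf).comp contDiff_fst).contDiffAt
  have hlin : ContDiffAt ℝ 2 (fun p : ℝ × ℝ => g * (p.2 - p.1) / 2) x :=
    (((contDiff_snd.sub contDiff_fst).const_smul g).div_const 2).contDiffAt
  exact ContDiffAt.prodMk contDiffAt_fst (((hlin.add hQ).sub hD))

lemma contDiffAt_H (g : ℝ) (hf : ContDiff ℝ 3 f) {x : ℝ × ℝ} (h : x.2 - x.1 ≠ 0) :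
    ContDiffAt ℝ 2 (fun p : ℝ × ℝ => (p.2, Vf g f p.1 p.2)) x := by
  have h2 : ContDiff ℝ 2 f := hf.of_le (by norm_num)
  have hQ : ContDiffAt ℝ 2 (fun p : ℝ × ℝ => Qf f p.1 p.2) x := by
    exact ((h2.comp contDiff_snd).sub (h2.comp contDiff_fst)).contDiffAt.div
      ((contDiff_snd.sub contDiff_fst)).contDiffAt h
  have hD : ContDiffAt ℝ 2 (fun p : ℝ × ℝ => deriv f p.2) x :=
    ((contDiff_deriv_f hf).comp contDiff_snd).contDiffAt
  have hlin : ContDiffAt ℝ 2 (fun p : ℝ × ℝ => g * (p.2 - p.1) / 2) x :=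
    (((contDiff_snd.sub contDiff_fst).const_smul g).div_const 2).contDiffAt
  exact ContDiffAt.prodMk contDiffAt_snd (((hlin.sub hQ).add hD))
lemma hasDerivAt_G_s (g : ℝ) (hf : ContDiff ℝ 3 f) (t : ℝ) {s : ℝ} (h : s - t ≠ 0) :
    HasDerivAt (fun s' => Gf g f t s') (g / 2 + Qds f t s) s := by
  have hline : HasDerivAt (fun s' : ℝ => ((t, s') : ℝ × ℝ)) ((0 : ℝ), (1 : ℝ)) s :=
    HasDerivAt.prodMk (hasDerivAt_const s t) (hasDerivAt_id s)
  have h1 := (hasFDerivAt_Phi g hf h).comp_hasDerivAt s hline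
  have h2 := hasFDerivAt_snd.comp_hasDerivAt s h1
  simpa [mk2_apply, Function.comp_def] using h2

lemma hasDerivAt_V_t (g : ℝ) (hf : ContDiff ℝ 3 f) (s : ℝ) {t : ℝ} (h : s - t ≠ 0) :
    HasDerivAt (fun t' => Vf g f t' s) (-(g / 2) - Qdt f t s) t := by
  have hline : HasDerivAt (fun t' : ℝ => ((t', s) : ℝ × ℝ)) ((1 : ℝ), (0 : ℝ)) t :=
    HasDerivAt.prodMk (hasDerivAt_id t) (hasDerivAt_const t s)
  have h1 := (hasFDerivAt_H g hf h).comp_hasDerivAt t hline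
  have h2 := hasFDerivAt_snd.comp_hasDerivAt t h1
  simpa [mk2_apply, Function.comp_def] using h2

end TennisAux

/-- there exists `v_* > 4‖f'‖` such that the tennis map
`Ψ(t,v) = (t̄, v̄)` is well defined on `{v > v_*}`, of class `C²`, injective,
with everywhere invertible differential, satisfies `t̄ > t`, commutes with the
unit translation in `t`, and obeys the bounce equations. -/
theorem tennis_map_well_defined (g : ℝ) (hg : 0 < g)
    (f : ℝ → ℝ) (hf : ContDiff ℝ 3 f) (hper : ∀ t, f (t + 1) = f t) :
    ∃ vs : ℝ, vs > 4 * sSup (Set.range fun s => |deriv f s|) ∧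
    ∃ Ψ : ℝ × ℝ → ℝ × ℝ,
      ContDiffOn ℝ 2 Ψ {p : ℝ × ℝ | vs < p.2} ∧
      Set.InjOn Ψ {p : ℝ × ℝ | vs < p.2} ∧
      (∀ p : ℝ × ℝ, vs < p.2 → (fderiv ℝ Ψ p).det ≠ 0) ∧
      (∀ p : ℝ × ℝ, vs < p.2 →
        p.1 < (Ψ p).1 ∧
        Ψ (p.1 + 1, p.2) = ((Ψ p).1 + 1, (Ψ p).2) ∧
        (Ψ p).1 = p.1 + 2 / g * p.2
            - 2 / g * ((f (Ψ p).1 - f p.1) / ((Ψ p).1 - p.1))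
            + 2 / g * deriv f p.1 ∧
        (Ψ p).2 = p.2 - 2 * ((f (Ψ p).1 - f p.1) / ((Ψ p).1 - p.1))
            + deriv f (Ψ p).1 + deriv f p.1) := by
  classical
  set M := sSup (Set.range fun s => |deriv f s|) with hMdef
  have hfd : Differentiable ℝ f := diff_f hf
  have hcont1 : Continuous (deriv f) := (contDiff_deriv_f hf).continuous
  have hperd : ∀ t, deriv f (t + 1) = deriv f t := by
    intro t
    have hfe : (fun x => f (x + 1)) = f := funext hper
    calc deriv f (t + 1) = deriv (fun x => f (x + 1)) t := by
          rw [deriv_comp_add_const]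
      _ = deriv f t := by rw [hfe]
  -- boundedness of deriv f
  have hperabs : Function.Periodic (fun s => |deriv f s|) 1 := fun t => by simp [hperd t]
  have hrange : (Set.range fun s => |deriv f s|) = (fun s => |deriv f s|) '' Set.uIcc 0 (0 + 1) :=
    (hperabs.image_uIcc one_ne_zero 0).symm
  have hbdd : BddAbove (Set.range fun s => |deriv f s|) := by
    rw [hrange]
    exact (isCompact_uIcc.image_of_continuousOn (hcont1.abs.continuousOn)).bddAbove
  have hMb : ∀ t, |deriv f t| ≤ M := fun t => le_csSup hbdd ⟨t, rfl⟩
  have hM0 : (0 : ℝ) ≤ M := le_trans (abs_nonneg _) (hMb 0)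
  have hLip : ∀ a b : ℝ, |f b - f a| ≤ M * |b - a| := by
    intro a b
    have := convex_univ.norm_image_sub_le_of_norm_deriv_le (f := f) (s := (Set.univ : Set ℝ))
      (fun x _ => hfd x) (fun x _ => by simpa [Real.norm_eq_abs] using hMb x)
      (Set.mem_univ a) (Set.mem_univ b)
    simpa [Real.norm_eq_abs] using this
  set vs : ℝ := 4 * M + 1 with hvsdef
  have hvspos : (0 : ℝ) < vs := by rw [hvsdef]; linarith
  set τ : ℝ := vs / g with hτdef
  have hτpos : 0 < τ := by rw [hτdef]; positivity
  refine ⟨vs, by rw [hvsdef]; linarith, ?_⟩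
  -- key bounds
  have hkey : ∀ t s : ℝ, τ ≤ s - t → |Qdt f t s| < g / 2 ∧ |Qds f t s| < g / 2 := by
    intro t s hts
    have hst : 0 < s - t := lt_of_lt_of_le hτpos hts
    have h1 : ∀ a : ℝ, |a| ≤ M → |a / (s - t)| ≤ M / τ := by
      intro a ha
      rw [abs_div, abs_of_pos hst]
      exact div_le_div₀ hM0 ha hτpos hts
    have h2 : |(f s - f t) / (s - t) ^ 2| ≤ M / τ := by
      rw [abs_div, abs_of_pos (by positivity : (0:ℝ) < (s - t)^2)]
      have hnum : |f s - f t| ≤ M * (s - t) := by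
        have := hLip t s
        rwa [abs_of_pos hst] at this
      calc |f s - f t| / (s - t) ^ 2 ≤ M * (s - t) / (s - t) ^ 2 := by gcongr
        _ = M / (s - t) := by field_simp
        _ ≤ M / τ := div_le_div₀ hM0 le_rfl hτpos hts
    have hMτ : M / τ + M / τ < g / 2 := by
      rw [hτdef, div_div_eq_mul_div, ← add_div,
        div_lt_div_iff₀ hvspos (by norm_num : (0:ℝ) < 2)]
      rw [hvsdef]
      nlinarith
    constructor
    · calc |Qdt f t s| ≤ |(-(deriv f t)) / (s - t)| + |(f s - f t) / (s - t) ^ 2| := by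
            rw [Qdt]; exact abs_add_le _ _
        _ ≤ M / τ + M / τ := add_le_add (h1 _ (by rw [abs_neg]; exact hMb t)) h2
        _ < g / 2 := hMτ
    · calc |Qds f t s| ≤ |deriv f s / (s - t)| + |(f s - f t) / (s - t) ^ 2| := by
            rw [Qds]; exact abs_sub _ _
        _ ≤ M / τ + M / τ := add_le_add (h1 _ (hMb s)) h2
        _ < g / 2 := hMτ
  -- strict monotonicity of G in s
  have hGmono : ∀ t : ℝ, StrictMonoOn (fun s => Gf g f t s) (Set.Ici (t + τ)) := by
    intro t
    apply strictMonoOn_of_deriv_pos (convex_Ici _)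
    · intro s hs
      have hs' : s - t ≠ 0 := by simp only [Set.mem_Ici] at hs; nlinarith [hτpos]
      exact ((hasDerivAt_G_s g hf t hs').continuousAt).continuousWithinAt
    · intro s hs
      rw [interior_Ici] at hs
      have hts : τ ≤ s - t := by simp only [Set.mem_Ioi] at hs; linarith
      have hs' : s - t ≠ 0 := by nlinarith [hτpos]
      rw [(hasDerivAt_G_s g hf t hs').deriv]
      have h := abs_lt.mp (hkey t s hts).2
      linarith [h.1]
  -- strict antitonicity of V in t
  have hVanti : ∀ s : ℝ, StrictAntiOn (fun t => Vf g f t s) (Set.Iic (s - τ)) := by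
    intro s
    apply strictAntiOn_of_deriv_neg (convex_Iic _)
    · intro t ht
      have ht' : s - t ≠ 0 := by simp only [Set.mem_Iic] at ht; nlinarith [hτpos]
      exact ((hasDerivAt_V_t g hf s ht').continuousAt).continuousWithinAt
    · intro t ht
      rw [interior_Iic] at ht
      have hts : τ ≤ s - t := by simp only [Set.mem_Iio] at ht; linarith
      have ht' : s - t ≠ 0 := by nlinarith [hτpos]
      rw [(hasDerivAt_V_t g hf s ht').deriv]
      have h := abs_lt.mp (hkey t s hts).1
      linarith [h.2]
  -- bounds on G
  have hQb : ∀ t s : ℝ, 0 < s - t → |Qf f t s| ≤ M := by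
    intro t s hst
    rw [Qf, abs_div, abs_of_pos hst, div_le_iff₀ hst]
    have := hLip t s
    rwa [abs_of_pos hst] at this
  have hGval : ∀ t s : ℝ, 0 < s - t → Gf g f t s ≤ g * (s - t) / 2 + 2 * M
      ∧ g * (s - t) / 2 - 2 * M ≤ Gf g f t s := by
    intro t s hst
    have h1 := abs_le.mp (hQb t s hst)
    have h2 := abs_le.mp (hMb t)
    rw [Gf]
    constructor <;> linarith [h1.1, h1.2, h2.1, h2.2]
  have hGatτ : ∀ t : ℝ, Gf g f t (t + τ) < vs := by
    intro t
    have hst : (0:ℝ) < (t + τ) - t := by linarith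
    have hττ : g * ((t + τ) - t) / 2 = vs / 2 := by
      have h : (t + τ) - t = τ := by ring
      rw [h, hτdef]
      field_simp
    calc Gf g f t (t + τ) ≤ g * ((t + τ) - t) / 2 + 2 * M := (hGval t (t + τ) hst).1
      _ = vs / 2 + 2 * M := by rw [hττ]
      _ < vs := by rw [hvsdef]; linarith
  -- existence of the bounce time
  have hex : ∀ p : ℝ × ℝ, vs < p.2 → ∃ s, τ < s - p.1 ∧ Gf g f p.1 s = p.2 := by
    rintro ⟨t, v⟩ hv
    simp only at hv ⊢
    have hv0 : (0:ℝ) < v := lt_trans hvspos hv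
    set b := t + τ + 2 * (v + 2 * M) / g with hbdef
    have hq0 : (0:ℝ) ≤ 2 * (v + 2 * M) / g := by
      apply div_nonneg _ (le_of_lt hg); nlinarith
    have hab : t + τ ≤ b := by rw [hbdef]; linarith
    have hcont : ContinuousOn (fun s => Gf g f t s) (Set.Icc (t + τ) b) := by
      intro s hs
      have hs' : s - t ≠ 0 := by
        have := hs.1; nlinarith [hτpos]
      exact ((hasDerivAt_G_s g hf t hs').continuousAt).continuousWithinAt
    have hbt : b - t = τ + 2 * (v + 2 * M) / g := by rw [hbdef]; ring
    have hst : 0 < b - t := by rw [hbt]; linarith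
    have hGb : v ≤ Gf g f t b := by
      have hval : g * (b - t) / 2 = g * τ / 2 + (v + 2 * M) := by
        rw [hbt]; field_simp
      have hgτ : (0:ℝ) ≤ g * τ / 2 := by positivity
      linarith [(hGval t b hst).2]
    have hmem : v ∈ Set.Icc (Gf g f t (t + τ)) (Gf g f t b) :=
      ⟨le_of_lt (lt_trans (hGatτ t) hv), hGb⟩
    obtain ⟨s, hsmem, hGs⟩ := intermediate_value_Icc hab hcont hmem
    refine ⟨s, ?_, hGs⟩
    rcases eq_or_lt_of_le hsmem.1 with heq | hlt
    · exfalso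
      have hGs' : Gf g f t (t + τ) = v := by rw [heq]; exact hGs
      have := hGatτ t
      rw [hGs'] at this
      linarith
    · linarith
  -- uniqueness of the bounce time
  have huniq : ∀ t v s s' : ℝ, (τ < s - t ∧ Gf g f t s = v) → (τ < s' - t ∧ Gf g f t s' = v)
      → s = s' := by
    intro t v s s' h1 h2
    apply (hGmono t).injOn (by simp only [Set.mem_Ici]; linarith [h1.1])
      (by simp only [Set.mem_Ici]; linarith [h2.1])
    show Gf g f t s = Gf g f t s'
    rw [h1.2, h2.2]
  -- the bounce-time function
  set sig : ℝ × ℝ → ℝ := fun p =>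
    if h : ∃ s, τ < s - p.1 ∧ Gf g f p.1 s = p.2 then h.choose else p.1 + τ + 1 with hsigdef
  have hsig : ∀ p : ℝ × ℝ, vs < p.2 → τ < sig p - p.1 ∧ Gf g f p.1 (sig p) = p.2 := by
    intro p hp
    rw [hsigdef]
    simp only
    rw [dif_pos (hex p hp)]
    exact (hex p hp).choose_spec
  set Ψ : ℝ × ℝ → ℝ × ℝ := fun p => (sig p, Vf g f p.1 (sig p)) with hΨdef
  set Φ : ℝ × ℝ → ℝ × ℝ := fun x => (x.1, Gf g f x.1 x.2) with hΦdef
  set Hm : ℝ × ℝ → ℝ × ℝ := fun x => (x.2, Vf g f x.1 x.2) with hHdef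
  set invm : ℝ × ℝ → ℝ × ℝ := fun q => (q.1, sig q) with hinvdef
  have hn12 : (1 : WithTop ℕ∞) ≤ 2 := by norm_num
  have hmain : ∀ p : ℝ × ℝ, vs < p.2 →
      ContDiffAt ℝ 2 Ψ p ∧ (fderiv ℝ Ψ p).det ≠ 0 := by
    rintro p hp
    obtain ⟨hτs, hGs⟩ := hsig p hp
    have hx : sig p - p.1 ≠ 0 := by nlinarith [hτpos]
    have hxpair : ((p.1, sig p) : ℝ × ℝ).2 - (p.1, sig p).1 ≠ 0 := hx
    have hdet : (1 : ℝ) * (g/2 + Qds f p.1 (sig p))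
        - 0 * (-(g/2) + Qdt f p.1 (sig p) - deriv (deriv f) p.1) ≠ 0 := by
      have h := abs_lt.mp (hkey p.1 (sig p) (le_of_lt hτs)).2
      simp only [one_mul, zero_mul, sub_zero]
      linarith [h.1]
    set A := mk2e 1 0 (-(g/2) + Qdt f p.1 (sig p) - deriv (deriv f) p.1)
      (g/2 + Qds f p.1 (sig p)) hdet with hA
    have hΦcd : ContDiffAt ℝ 2 Φ (p.1, sig p) := contDiffAt_Phi g hf hxpair
    have hΦ' : HasFDerivAt Φ (A : ℝ × ℝ →L[ℝ] ℝ × ℝ) (p.1, sig p) := by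
      rw [hA, mk2e_coe]
      exact hasFDerivAt_Phi g hf hx
    have hΦp : Φ (p.1, sig p) = p := Prod.ext rfl hGs
    -- eventual left inverse
    have hW : ∀ᶠ x in 𝓝 ((p.1, sig p) : ℝ × ℝ), invm (Φ x) = x := by
      have hopenV : IsOpen {x : ℝ × ℝ | τ < x.2 - x.1} :=
        isOpen_lt continuous_const (continuous_snd.sub continuous_fst)
      have hcontG : ContinuousOn (fun x : ℝ × ℝ => Gf g f x.1 x.2)
          {x : ℝ × ℝ | τ < x.2 - x.1} := by
        intro x hx'
        simp only [Set.mem_setOf_eq] at hx'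
        have hxne : x.2 - x.1 ≠ 0 := by nlinarith [hτpos]
        have h1 : ContinuousAt (fun x : ℝ × ℝ => (x.1, Gf g f x.1 x.2)) x :=
          (contDiffAt_Phi g hf hxne).continuousAt
        exact (continuous_snd.continuousAt.comp h1).continuousWithinAt
      have hopenW : IsOpen ({x : ℝ × ℝ | τ < x.2 - x.1}
          ∩ (fun x : ℝ × ℝ => Gf g f x.1 x.2) ⁻¹' Set.Ioi vs) :=
        hcontG.isOpen_inter_preimage hopenV isOpen_Ioi
      have hmem : ((p.1, sig p) : ℝ × ℝ) ∈ {x : ℝ × ℝ | τ < x.2 - x.1}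
          ∩ (fun x : ℝ × ℝ => Gf g f x.1 x.2) ⁻¹' Set.Ioi vs := by
        constructor
        · exact hτs
        · simp only [Set.mem_preimage, Set.mem_Ioi]
          rw [hGs]
          exact hp
      filter_upwards [hopenW.mem_nhds hmem] with x hx'
      obtain ⟨hx1, hx2⟩ := hx'
      simp only [Set.mem_setOf_eq] at hx1
      simp only [Set.mem_preimage, Set.mem_Ioi] at hx2
      have hsx := hsig (x.1, Gf g f x.1 x.2) hx2
      have hux : sig (x.1, Gf g f x.1 x.2) = x.2 :=
        huniq x.1 (Gf g f x.1 x.2) _ x.2 ⟨hsx.1, hsx.2⟩ ⟨hx1, rfl⟩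
      exact Prod.ext rfl hux
    have hstrict := hΦcd.hasStrictFDerivAt' (f' := A) hΦ' (by norm_num)
    have hloc := hΦcd.to_localInverse (f' := A) hΦ' (by norm_num)
    have hequ := hstrict.localInverse_unique hW
    have hinvcd : ContDiffAt ℝ 2 invm p := by
      rw [← hΦp]
      exact hloc.congr_of_eventuallyEq hequ
    have hinv' : HasStrictFDerivAt invm ((A.symm : ℝ × ℝ →L[ℝ] ℝ × ℝ)) p := by
      have h := hstrict.to_local_left_inverse hW
      rwa [hΦp] at h
    have hdetB : (0:ℝ) * (g/2 - Qds f p.1 (sig p) + deriv (deriv f) (sig p))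
        - 1 * (-(g/2) - Qdt f p.1 (sig p)) ≠ 0 := by
      have h := abs_lt.mp (hkey p.1 (sig p) (le_of_lt hτs)).1
      simp only [zero_mul, one_mul, zero_sub]
      intro hcon
      have : -(g/2) - Qdt f p.1 (sig p) = 0 := by linarith [neg_eq_zero.mp hcon]
      linarith [h.2]
    set B := mk2e 0 1 (-(g/2) - Qdt f p.1 (sig p))
      (g/2 - Qds f p.1 (sig p) + deriv (deriv f) (sig p)) hdetB with hB
    have hB' : HasFDerivAt Hm (B : ℝ × ℝ →L[ℝ] ℝ × ℝ) (p.1, sig p) := by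
      rw [hB, mk2e_coe]
      exact hasFDerivAt_H g hf hx
    have hΨcd : ContDiffAt ℝ 2 Ψ p := by
      have h := (contDiffAt_H g hf hxpair).comp p hinvcd
      exact h
    have hΨ' : HasFDerivAt Ψ ((B : ℝ × ℝ →L[ℝ] ℝ × ℝ).comp (A.symm : ℝ × ℝ →L[ℝ] ℝ × ℝ)) p := by
      have h := hB'.comp p hinv'.hasFDerivAt
      exact h
    refine ⟨hΨcd, ?_⟩
    rw [hΨ'.fderiv, ContinuousLinearEquiv.comp_coe]
    exact det_ne_zero_equiv _
  -- injectivity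
  have hinj : Set.InjOn Ψ {p : ℝ × ℝ | vs < p.2} := by
    rintro p hp q hq heq
    simp only [Set.mem_setOf_eq] at hp hq
    have h1 := hsig p hp
    have h2 := hsig q hq
    have heq' : (sig p, Vf g f p.1 (sig p)) = (sig q, Vf g f q.1 (sig q)) := heq
    rw [Prod.mk.injEq] at heq'
    obtain ⟨hs, hV⟩ := heq'
    have ht : p.1 = q.1 := by
      apply (hVanti (sig p)).injOn
        (by simp only [Set.mem_Iic]; linarith [h1.1] : p.1 ∈ Set.Iic (sig p - τ))
        (by simp only [Set.mem_Iic]; rw [hs]; linarith [h2.1] : q.1 ∈ Set.Iic (sig p - τ))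
      show Vf g f p.1 (sig p) = Vf g f q.1 (sig p)
      rw [hV, hs]
    have hv2 : p.2 = q.2 := by rw [← h1.2, ← h2.2, ht, hs]
    exact Prod.ext ht hv2
  refine ⟨Ψ, fun p hp => (hmain p hp).1.contDiffWithinAt, hinj,
    fun p hp => (hmain p hp).2, ?_⟩
  intro p hp
  obtain ⟨hτs, hGs⟩ := hsig p hp
  have hxpos : (0:ℝ) < sig p - p.1 := lt_trans hτpos hτs
  have hne : sig p - p.1 ≠ 0 := ne_of_gt hxpos
  refine ⟨?_, ?_, ?_, ?_⟩
  · show p.1 < (Ψ p).1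
    have h1 : (Ψ p).1 = sig p := rfl
    rw [h1]
    linarith
  · -- translation equivariance
    have hp' : vs < ((p.1 + 1, p.2) : ℝ × ℝ).2 := hp
    have h2 := hsig (p.1 + 1, p.2) hp'
    have hGper : Gf g f (p.1 + 1) (sig p + 1) = Gf g f p.1 (sig p) := by
      simp only [Gf, Qf, hper, hperd]
      ring_nf
    have hVper : Vf g f (p.1 + 1) (sig p + 1) = Vf g f p.1 (sig p) := by
      simp only [Vf, Qf, hper, hperd]
      ring_nf
    have hττ : τ < sig p + 1 - ((p.1 + 1, p.2) : ℝ × ℝ).1 := by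
      have h : sig p + 1 - (p.1 + 1) = sig p - p.1 := by ring
      show τ < sig p + 1 - (p.1 + 1)
      rw [h]
      exact hτs
    have hss : sig (p.1 + 1, p.2) = sig p + 1 := by
      apply huniq (p.1 + 1) p.2 _ (sig p + 1) ⟨h2.1, h2.2⟩
      refine ⟨hττ, ?_⟩
      rw [hGper, hGs]
    refine Prod.ext ?_ ?_
    · show sig (p.1 + 1, p.2) = sig p + 1
      exact hss
    · show Vf g f (p.1 + 1) (sig (p.1 + 1, p.2)) = Vf g f p.1 (sig p)
      rw [hss]
      exact hVper
  · show sig p = p.1 + 2 / g * p.2 - 2 / g * ((f (sig p) - f p.1) / (sig p - p.1))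
        + 2 / g * deriv f p.1
    rw [← hGs, Gf, Qf]
    field_simp
    ring
  · show Vf g f p.1 (sig p) = p.2 - 2 * ((f (sig p) - f p.1) / (sig p - p.1))
        + deriv f (sig p) + deriv f p.1
    rw [← hGs, Gf, Vf, Qf]
    ring
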